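/- Let λ ∈ 𝔥* and w ∈ W. Then there exists w′ ∈ W_λ such that Δ⁺ ∩ (w′w^{−1})^{−1}Δ⁻ ∩ wΔ_λ = ∅. -/

import Mathlib

noncomputable section

open Complex

namespace Paper

variable {V : Type} [AddCommGroup V] [Module ℂ V]

/-- Data of the root system `Δ` of a complex semisimple Lie algebra inside `𝔥* = V`,
together with the (Killing-form induced) symmetric nondegenerate bilinear form and
a fixed positive system `Pos = Δ⁺`. -/
structure RootDatum (V : Type) [AddCommGroup V] [Module ℂ V] : Type where
  /-- the bilinear form `⟨·,·⟩` on `𝔥*` induced by the Killing form -/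
  B : V →ₗ[ℂ] V →ₗ[ℂ] ℂ
  Bsymm : ∀ x y, B x y = B y x
  Bnondeg : ∀ x, (∀ y, B x y = 0) → x = 0
  /-- the set of roots -/
  Δ : Set V
  finite : Δ.Finite
  zero_not_mem : (0 : V) ∉ Δ
  root_self_ne : ∀ α ∈ Δ, B α α ≠ 0
  neg_mem : ∀ α ∈ Δ, -α ∈ Δ
  refl_mem : ∀ α ∈ Δ, ∀ β ∈ Δ, β - ((2 / B α α) * B α β) • α ∈ Δ
  pair_int : ∀ α ∈ Δ, ∀ β ∈ Δ, ∃ n : ℤ, (2 / B α α) * B α β = (n : ℂ)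
  /-- the positive system `Δ⁺` -/
  Pos : Set V
  pos_subset : Pos ⊆ Δ
  pos_total : ∀ α ∈ Δ, α ∈ Pos ∨ -α ∈ Pos
  pos_not_neg : ∀ α ∈ Pos, -α ∉ Pos
  pos_closed : ∀ α ∈ Pos, ∀ β ∈ Pos, α + β ∈ Δ → α + β ∈ Pos

namespace RootDatum

variable (rd : RootDatum V)

/-- `⟨α̌, μ⟩` where `α̌ = 2α/⟨α,α⟩`. -/
def pair (α μ : V) : ℂ := (2 / rd.B α α) * rd.B α μ

/-- The reflection `s_α` as a linear map:  `s_α(μ) = μ - ⟨α̌,μ⟩ α`. -/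
def sLin (α : V) : V →ₗ[ℂ] V :=
  LinearMap.id - (2 / rd.B α α) • ((LinearMap.toSpanSingleton ℂ V α).comp (rd.B α))

lemma sLin_apply (α μ : V) : rd.sLin α μ = μ - rd.pair α μ • α := by
  simp [sLin, pair, LinearMap.toSpanSingleton, sub_eq_add_neg, mul_smul]

lemma s_involutive (α : V) : Function.Involutive (rd.sLin α) := by
  intro μ
  rw [rd.sLin_apply, rd.sLin_apply]
  by_cases h : rd.B α α = 0
  · simp [pair, h]
  · have h1 : rd.pair α (μ - rd.pair α μ • α) = - rd.pair α μ := by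
      simp only [pair, map_sub, map_smul]
      field_simp
      ring_nf
      rw [mul_inv_cancel_right₀ h]
      ring
    rw [h1]
    module

/-- The reflection `s_α ∈ GL(𝔥*)`. -/
def s (α : V) : V ≃ₗ[ℂ] V :=
  LinearEquiv.ofInvolutive (rd.sLin α) (rd.s_involutive α)

lemma s_apply (α μ : V) : rd.s α μ = μ - rd.pair α μ • α := rd.sLin_apply α μ

/-- The Weyl group `W`, as the subgroup of `GL(𝔥*)` generated by the reflections. -/
def W : Subgroup (V ≃ₗ[ℂ] V) := Subgroup.closure {g | ∃ α ∈ rd.Δ, g = rd.s α}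

/-- `⟨α̌, μ⟩ ∈ ℤ` -/
def pairInt (α μ : V) : Prop := ∃ n : ℤ, rd.pair α μ = (n : ℂ)

/-- `⟨α̌, μ⟩ ∈ ℤ_{<0}` -/
def pairNegInt (α μ : V) : Prop := ∃ n : ℤ, n < 0 ∧ rd.pair α μ = (n : ℂ)

/-- the integral weight lattice `𝒫` -/
def P : Set V := {μ | ∀ α ∈ rd.Δ, rd.pairInt α μ}

/-- the integral root system `Δ_λ` -/
def Δint (lam : V) : Set V := {α ∈ rd.Δ | rd.pairInt α lam}

/-- the integral Weyl group `W_λ = {w ∈ W ∣ wλ - λ ∈ 𝒫}` (as a subset of `GL(𝔥*)`) -/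
def Wint (lam : V) : Set (V ≃ₗ[ℂ] V) := {w | w ∈ rd.W ∧ w lam - lam ∈ rd.P}

/-- `Δ_λ⁺ = Δ⁺ ∩ Δ_λ` -/
def PosInt (lam : V) : Set V := rd.Pos ∩ rd.Δint lam

/-- the simple roots `Π_λ` of `Δ_λ⁺`, i.e. the indecomposable positive roots -/
def SimpleInt (lam : V) : Set V :=
  {α ∈ rd.PosInt lam | ¬ ∃ β ∈ rd.PosInt lam, ∃ γ ∈ rd.PosInt lam, α = β + γ}

/-- `W_λ⁰ = {w ∈ W_λ ∣ wλ = λ}` -/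
def Wint0 (lam : V) : Set (V ≃ₗ[ℂ] V) := {w ∈ rd.Wint lam | w lam = lam}

/-- the length `ℓ_λ(w) = #(Δ_λ⁺ ∩ w⁻¹ Δ⁻)` of `w` as an element of `W_λ` -/
def lenInt (lam : V) (w : V ≃ₗ[ℂ] V) : ℕ :=
  Set.ncard {α | α ∈ rd.PosInt lam ∧ -(w α) ∈ rd.Pos}

/-- `w` is the longest element `w_λ` of `W_λ`:  `w ∈ W_λ` and `w(Δ_λ⁺) = Δ_λ⁻`. -/
def IsLongest (lam : V) (w : V ≃ₗ[ℂ] V) : Prop :=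
  w ∈ rd.Wint lam ∧ ∀ α ∈ rd.PosInt lam, -(w α) ∈ rd.PosInt lam

/-- `λ` is dominant: `⟨α̌,λ⟩ ∉ ℤ_{<0}` for all `α ∈ Δ⁺`. -/
def IsDominant (lam : V) : Prop := ∀ α ∈ rd.Pos, ¬ rd.pairNegInt α lam

/-- `(β_1, …, β_l)` with `β_i = s_{α_1} ⋯ s_{α_{i-1}} (α_i)`, for a sequence `(α_1, …, α_l)`. -/
def betaList : List V → List V
  | [] => []
  | α :: L => α :: (betaList L).map (rd.s α)

/-- `s_{γ_r} ⋯ s_{γ_1} μ` for a list `(γ_1, …, γ_r)`. -/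
def chainApply : List V → V → V
  | [], μ => μ
  | γ :: t, μ => chainApply t (rd.s γ μ)

/-- the condition `⟨γ̌_k, s_{γ_{k-1}} ⋯ s_{γ_1} μ⟩ ∈ ℤ_{<0}` for all `k`. -/
def chainCond : List V → V → Prop
  | [], _ => True
  | γ :: t, μ => rd.pairNegInt γ μ ∧ chainCond t (rd.s γ μ)

/-- The set `A_{(s_{α_1},…,s_{α_l})}(μ)` attached to the sequence `L = (α_1, …, α_l)`
of simple roots: all `μ' = s_{β_{i_r}} ⋯ s_{β_{i_1}} μ` where `1 ≤ i_1 < ⋯ < i_r ≤ l` and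
`⟨β̌_{i_k}, s_{β_{i_{k-1}}} ⋯ s_{β_{i_1}} μ⟩ ∈ ℤ_{<0}` for all `k = 1, …, r`. -/
def Aset (L : List V) (μ : V) : Set V :=
  {μ' | ∃ γs : List V, γs.Sublist (rd.betaList L) ∧ rd.chainCond γs μ ∧ μ' = rd.chainApply γs μ}

/-- `L = (α_1, …, α_l)` gives a reduced expression `w = s_{α_1} ⋯ s_{α_l}` of `w ∈ W_λ`
as a product of elements of `S_λ`. -/
def IsReducedWord (lam : V) (w : V ≃ₗ[ℂ] V) (L : List V) : Prop :=
  (∀ α ∈ L, α ∈ rd.SimpleInt lam) ∧ (L.map rd.s).prod = w ∧ L.length = rd.lenInt lam w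

/-- The set `W_λ⁰ w⁻¹ · S = {u w⁻¹ ν ∣ u ∈ W_λ⁰, ν ∈ S}`. -/
def orbitSet (lam : V) (w : V ≃ₗ[ℂ] V) (S : Set V) : Set V :=
  {x | ∃ u ∈ rd.Wint0 lam, ∃ ν ∈ S, x = u (w⁻¹ ν)}

end RootDatum

end Paper

open Paper

namespace Paper.RootDatum

variable {V : Type} [AddCommGroup V] [Module ℂ V] (rd : RootDatum V)

lemma pair_right_add (a x y : V) : rd.pair a (x + y) = rd.pair a x + rd.pair a y := by
  simp [pair, mul_add]

lemma pair_right_smul (a : V) (c : ℂ) (x : V) : rd.pair a (c • x) = c * rd.pair a x := by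
  simp [pair]; ring

lemma pair_right_neg (a x : V) : rd.pair a (-x) = - rd.pair a x := by simp [pair]

lemma pair_right_sub (a x y : V) : rd.pair a (x - y) = rd.pair a x - rd.pair a y := by
  simp [pair, mul_sub]

lemma pair_self (a : V) (h : rd.B a a ≠ 0) : rd.pair a a = 2 := by
  rw [pair]; field_simp

lemma B_s_s (a x y : V) : rd.B (rd.s a x) (rd.s a y) = rd.B x y := by
  rcases eq_or_ne (rd.B a a) 0 with h | h
  · simp [s_apply, pair, h]
  · rw [s_apply, s_apply, pair, pair]
    have hxa : rd.B x a = rd.B a x := rd.Bsymm x a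
    simp only [map_sub, map_smul, LinearMap.sub_apply, LinearMap.smul_apply, smul_eq_mul]
    field_simp
    ring_nf
    rw [hxa]
    ring

lemma s_mem_delta {a b : V} (ha : a ∈ rd.Δ) (hb : b ∈ rd.Δ) : rd.s a b ∈ rd.Δ := by
  have := rd.refl_mem a ha b hb
  rwa [s_apply, pair]

/-- the invariance properties enjoyed by all elements of `W` -/
def Preserves (g : V ≃ₗ[ℂ] V) : Prop :=
  (∀ x y, rd.B (g x) (g y) = rd.B x y) ∧ ∀ d ∈ rd.Δ, g d ∈ rd.Δ

lemma preserves_inv_delta (g : V ≃ₗ[ℂ] V) (h : ∀ d ∈ rd.Δ, g d ∈ rd.Δ) :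
    ∀ d ∈ rd.Δ, g.symm d ∈ rd.Δ := by
  have hsub : ⇑g '' rd.Δ ⊆ rd.Δ := by rintro x ⟨d, hd, rfl⟩; exact h d hd
  have hcard : rd.Δ.ncard ≤ (⇑g '' rd.Δ).ncard := by
    rw [Set.ncard_image_of_injective _ g.injective]
  have heq : ⇑g '' rd.Δ = rd.Δ :=
    Set.eq_of_subset_of_ncard_le hsub hcard rd.finite
  intro d hd
  rw [← heq] at hd
  rcases hd with ⟨e, he, rfl⟩
  rwa [g.symm_apply_apply]

lemma preserves_of_mem_W {g : V ≃ₗ[ℂ] V} (hg : g ∈ rd.W) : rd.Preserves g := by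
  induction hg using Subgroup.closure_induction with
  | mem x hx =>
    obtain ⟨a, ha, rfl⟩ := hx
    exact ⟨rd.B_s_s a, fun d hd => rd.s_mem_delta ha hd⟩
  | one => exact ⟨fun _ _ => rfl, fun d hd => hd⟩
  | mul x y hx hy px py =>
    refine ⟨fun u v => ?_, fun d hd => ?_⟩
    · have : (x * y) u = x (y u) := rfl
      rw [this]; have : (x * y) v = x (y v) := rfl
      rw [this, px.1, py.1]
    · have : (x * y) d = x (y d) := rfl
      rw [this]; exact px.2 _ (py.2 d hd)
  | inv x hx px =>
    have hinv : (x⁻¹ : V ≃ₗ[ℂ] V) = x.symm := rfl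
    refine ⟨fun u v => ?_, ?_⟩
    · rw [hinv, ← px.1 (x.symm u) (x.symm v), x.apply_symm_apply, x.apply_symm_apply]
    · rw [hinv]; exact rd.preserves_inv_delta x px.2

lemma pair_invariant {g : V ≃ₗ[ℂ] V} (hg : rd.Preserves g) (a x : V) :
    rd.pair (g a) (g x) = rd.pair a x := by
  rw [pair, pair, hg.1, hg.1]

lemma s_conj {g : V ≃ₗ[ℂ] V} (hg : rd.Preserves g) (a x : V) :
    rd.s (g a) x = g (rd.s a (g.symm x)) := by
  rw [s_apply, s_apply, map_sub, map_smul, g.apply_symm_apply]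
  have : rd.pair (g a) x = rd.pair a (g.symm x) := by
    conv_lhs => rw [← g.apply_symm_apply x]
    exact rd.pair_invariant hg a (g.symm x)
  rw [this]

set_option maxHeartbeats 1000000 in
lemma sum_mem_pos {a b : V} (ha : a ∈ rd.Pos) (hb : b ∈ rd.Pos)
    {m : ℤ} (hm : m < 0) (hab : rd.pair a b = (m : ℂ)) : a + b ∈ rd.Pos := by
  have haΔ := rd.pos_subset ha
  have hbΔ := rd.pos_subset hb
  have hBa := rd.root_self_ne a haΔ
  have hBb := rd.root_self_ne b hbΔ
  obtain ⟨q, hq⟩ : ∃ n : ℤ, rd.pair b a = (n : ℂ) := rd.pair_int b hbΔ a haΔ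
  by_cases hm1 : m = -1
  · have hd : rd.s a b ∈ rd.Δ := rd.s_mem_delta haΔ hbΔ
    have e : b - ((m : ℂ)) • a = b + a := by subst hm1; push_cast; module
    rw [s_apply, hab, e] at hd
    have := rd.pos_closed b hb a ha hd
    rwa [add_comm] at this
  by_cases hq1 : q = -1
  · have hd : rd.s b a ∈ rd.Δ := rd.s_mem_delta hbΔ haΔ
    have e : a - ((q : ℂ)) • b = a + b := by subst hq1; push_cast; module
    rw [s_apply, hq, e] at hd
    exact rd.pos_closed a ha b hb hd
  exfalso
  by_cases hq0 : q = 0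
  · have hba0 : rd.B b a = 0 := by
      rw [hq0] at hq
      rw [pair] at hq
      simpa [div_ne_zero (two_ne_zero) hBb] using hq
    have hab0 : rd.B a b = 0 := by rw [rd.Bsymm a b, hba0]
    rw [pair, hab0, mul_zero] at hab
    have : m = 0 := by exact_mod_cast hab.symm
    omega
  have hm2 : m ≤ -2 := by omega
  have hq' : q ≤ -2 ∨ 1 ≤ q := by omega
  have hq0c : (q : ℂ) ≠ 0 := Int.cast_ne_zero.mpr hq0
  by_cases hdep : ∃ c : ℂ, b = c • a
  · obtain ⟨c, rfl⟩ := hdep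
    have hc2 : (m : ℂ) = 2 * c := by
      rw [← hab, pair_right_smul, pair_self _ _ hBa]; ring
    have hc0 : c ≠ 0 := by
      rintro rfl
      rw [zero_smul] at hbΔ
      exact rd.zero_not_mem hbΔ
    have hq2 : (q : ℂ) * c = 2 := by
      have h1 : rd.pair (c • a) a = (q : ℂ) := hq
      rw [pair] at h1
      simp only [map_smul, LinearMap.smul_apply, smul_eq_mul] at h1
      have h2 : (2 : ℂ) / (c * (c * rd.B a a)) * (c * rd.B a a) = 2 / c := by
        field_simp
      rw [h2] at h1
      field_simp at h1
      linear_combination -h1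
    have hmq4 : m * q = 4 := by
      have h4 : ((m * q : ℤ) : ℂ) = 4 := by
        push_cast
        linear_combination (q : ℂ) * hc2 + 2 * hq2
      exact_mod_cast h4
    have hqm : q ≤ -2 := by
      rcases hq' with h | h
      · exact h
      · nlinarith
    have hm22 : m = -2 := by nlinarith
    have hcm1 : c = -1 := by
      rw [hm22] at hc2; push_cast at hc2; linear_combination -hc2 / 2
    rw [hcm1, neg_one_smul] at hb
    exact rd.pos_not_neg a ha hb
  -- independent case: dynamics of g = s_a ∘ s_b
  set g : V ≃ₗ[ℂ] V := (rd.s b).trans (rd.s a) with hgdef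
  have hgapp : ∀ x, g x = rd.s a (rd.s b x) := fun x => rfl
  have hsa_b : rd.s a b = b - (m : ℂ) • a := by rw [s_apply, hab]
  have hsb_a : rd.s b a = a - (q : ℂ) • b := by rw [s_apply, hq]
  have hsa_a : rd.s a a = -a := by rw [s_apply, pair_self _ _ hBa]; module
  have hsb_b : rd.s b b = -b := by rw [s_apply, pair_self _ _ hBb]; module
  have hga : g a = ((m : ℂ) * q - 1) • a - (q : ℂ) • b := by
    rw [hgapp, hsb_a, map_sub, map_smul, hsa_a, hsa_b]
    match_scalars <;> ring
  have hgb : g b = (m : ℂ) • a - b := by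
    rw [hgapp, hsb_b, map_neg, hsa_b]
    match_scalars <;> ring
  have hpow : ∀ n : ℕ, ∀ d ∈ rd.Δ, (g ^ n) d ∈ rd.Δ := by
    intro n
    induction n with
    | zero => intro d hd; simpa using hd
    | succ k ih =>
      intro d hd
      rw [pow_succ']
      have : (g * g ^ k) d = g ((g ^ k) d) := rfl
      rw [this]
      rw [hgapp]
      exact rd.s_mem_delta haΔ (rd.s_mem_delta hbΔ (ih d hd))
  obtain ⟨N, hN1, hNa, hNb⟩ : ∃ N : ℕ, 1 ≤ N ∧ (g ^ N) a = a ∧ (g ^ N) b = b := by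
    have hfin : Finite ↥((rd.Δ ×ˢ rd.Δ : Set (V × V))) := (rd.finite.prod rd.finite).to_subtype
    have hmap : ∀ n : ℕ, ((g ^ n) a, (g ^ n) b) ∈ (rd.Δ ×ˢ rd.Δ : Set (V × V)) :=
      fun n => ⟨hpow n a haΔ, hpow n b hbΔ⟩
    obtain ⟨i, j, hij, hEq⟩ :=
      Finite.exists_ne_map_eq_of_infinite (fun n : ℕ => (⟨_, hmap n⟩ : ↥(rd.Δ ×ˢ rd.Δ)))
    have hEq' : ((g ^ i) a, (g ^ i) b) = ((g ^ j) a, (g ^ j) b) := congrArg Subtype.val hEq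
    have key : ∀ i j : ℕ, i < j → ((g ^ i) a, (g ^ i) b) = ((g ^ j) a, (g ^ j) b) →
        ∃ N : ℕ, 1 ≤ N ∧ (g ^ N) a = a ∧ (g ^ N) b = b := by
      intro i j hlt hE
      have hEa : (g ^ i) a = (g ^ j) a := congrArg Prod.fst hE
      have hEb : (g ^ i) b = (g ^ j) b := congrArg Prod.snd hE
      have hpows : g ^ i * g ^ (j - i) = g ^ j := by rw [← pow_add]; congr 1; omega
      refine ⟨j - i, by omega, ?_, ?_⟩
      · have h1 : (g ^ i) ((g ^ (j - i)) a) = (g ^ i) a := by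
          have h2 : (g ^ i * g ^ (j - i)) a = (g ^ i) ((g ^ (j - i)) a) := rfl
          rw [← h2, hpows, ← hEa]
        exact (g ^ i).injective h1
      · have h1 : (g ^ i) ((g ^ (j - i)) b) = (g ^ i) b := by
          have h2 : (g ^ i * g ^ (j - i)) b = (g ^ i) ((g ^ (j - i)) b) := rfl
          rw [← h2, hpows, ← hEb]
        exact (g ^ i).injective h1
    rcases hij.lt_or_gt with hlt | hlt
    · exact key i j hlt hEq'
    · exact key j i hlt hEq'.symm
  by_cases ht4 : m * q = 4
  · have hqm : q ≤ -2 := by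
      rcases hq' with h | h
      · exact h
      · nlinarith
    have hm22 : m = -2 ∧ q = -2 := by constructor <;> nlinarith
    obtain ⟨hm22, hq22⟩ := hm22
    have hgu : g (a + b) = a + b := by
      rw [map_add, hga, hgb, hm22, hq22]
      push_cast
      match_scalars <;> ring
    have hgbn : ∀ n : ℕ, (g ^ n) b = b - ((2 * n : ℕ) : ℂ) • (a + b) := by
      intro n
      induction n with
      | zero => simp
      | succ k ih =>
        rw [pow_succ']
        have h2 : (g * g ^ k) b = g ((g ^ k) b) := rfl
        rw [h2, ih, map_sub, map_smul, hgu, hgb, hm22]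
        push_cast
        match_scalars <;> ring
    have hu0 : a + b = 0 := by
      have h1 := hgbn N
      rw [hNb] at h1
      have h2 : ((2 * N : ℕ) : ℂ) • (a + b) = 0 := by
        have := sub_eq_self.mp h1.symm
        exact this
      rcases smul_eq_zero.mp h2 with h3 | h3
      · exfalso
        have : (2 * N : ℕ) ≠ 0 := by omega
        exact this (by exact_mod_cast h3)
      · exact h3
    exact hdep ⟨-1, by rw [neg_one_smul]; linear_combination (norm := module) hu0⟩
  -- eigenvalue case
  have htr : m * q ≤ -2 ∨ 5 ≤ m * q := by
    rcases hq' with h | h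
    · right
      have h4 : 4 ≤ m * q := by nlinarith
      have h5 : 4 < m * q := lt_of_le_of_ne h4 (Ne.symm ht4)
      omega
    · left; nlinarith
  set T : ℝ := ((m : ℝ) * q) - 2 with hTdef
  have hT3 : 3 ≤ |T| := by
    rcases htr with h | h
    · have h' : (m : ℝ) * q ≤ -2 := by exact_mod_cast h
      rw [_root_.abs_of_nonpos (by simp only [hTdef]; linarith)]
      simp only [hTdef]; linarith
    · have h' : (5 : ℝ) ≤ (m : ℝ) * q := by exact_mod_cast h
      rw [_root_.abs_of_nonneg (by simp only [hTdef]; linarith)]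
      simp only [hTdef]; linarith
  have hT2 : (0 : ℝ) ≤ T ^ 2 - 4 := by nlinarith [_root_.sq_abs T]
  set s0 : ℝ := Real.sqrt (T ^ 2 - 4) with hs0def
  have hs0sq : s0 ^ 2 = T ^ 2 - 4 := Real.sq_sqrt hT2
  have hs0nn : 0 ≤ s0 := Real.sqrt_nonneg _
  set lam0 : ℝ := (|T| + s0) / 2 with hlam0def
  have hlam0gt : 1 < lam0 := by rw [hlam0def]; linarith
  have heig0 : lam0 ^ 2 - |T| * lam0 + 1 = 0 := by
    rw [hlam0def]
    linear_combination (hs0sq - _root_.sq_abs T) / 4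
  set lr : ℝ := if 0 ≤ T then lam0 else -lam0 with hlrdef
  have heigT : lr ^ 2 - T * lr + 1 = 0 := by
    rw [hlrdef]
    split_ifs with h
    · rw [_root_.abs_of_nonneg h] at heig0; linarith
    · rw [_root_.abs_of_neg (not_le.mp h)] at heig0; linarith
  have habs : 1 < |lr| := by
    rw [hlrdef]
    split_ifs with h
    · rwa [_root_.abs_of_pos (by linarith)]
    · rwa [abs_neg, abs_of_pos (by linarith)]
  set L : ℂ := (lr : ℂ) with hLdef
  have hLeq : L ^ 2 - ((m : ℂ) * q - 2) * L + 1 = 0 := by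
    have := congrArg (fun x : ℝ => (x : ℂ)) heigT
    push_cast at this
    rw [hLdef]
    push_cast
    simp only [hTdef] at this
    push_cast at this
    linear_combination this
  set v : V := (L + 1) • a - (q : ℂ) • b with hvdef
  have hv0 : v ≠ 0 := by
    intro h
    apply hdep
    refine ⟨(L + 1) / (q : ℂ), ?_⟩
    have h1 : (q : ℂ) • b = (L + 1) • a := by
      rw [hvdef] at h
      have := sub_eq_zero.mp h
      exact this.symm
    calc b = ((q : ℂ)⁻¹ * (q : ℂ)) • b := by rw [inv_mul_cancel₀ hq0c, one_smul]
      _ = (q : ℂ)⁻¹ • ((q : ℂ) • b) := by rw [mul_smul]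
      _ = (q : ℂ)⁻¹ • ((L + 1) • a) := by rw [h1]
      _ = ((L + 1) / (q : ℂ)) • a := by rw [smul_smul]; ring_nf
  have hgv : g v = L • v := by
    rw [hvdef, map_sub, map_smul, map_smul, hga, hgb]
    match_scalars
    · linear_combination (-(1 : ℂ)) * hLeq
    · ring
  have hgnv : ∀ n : ℕ, (g ^ n) v = L ^ n • v := by
    intro n
    induction n with
    | zero => simp
    | succ k ih =>
      rw [pow_succ']
      have h2 : (g * g ^ k) v = g ((g ^ k) v) := rfl
      rw [h2, ih, map_smul, hgv, smul_smul, pow_succ]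
  have hNv : (g ^ N) v = v := by
    rw [hvdef, map_sub, map_smul, map_smul, hNa, hNb]
  have hLN : L ^ N = 1 := by
    have h1 : L ^ N • v = v := by rw [← hgnv, hNv]
    have h2 : (L ^ N - 1) • v = 0 := by rw [sub_smul, one_smul, h1, sub_self]
    rcases smul_eq_zero.mp h2 with h3 | h3
    · exact sub_eq_zero.mp h3
    · exact absurd h3 hv0
  have habsN : |lr| ^ N = 1 := by
    have := congrArg (fun z : ℂ => ‖z‖) hLN
    simp only [norm_pow, hLdef, Complex.norm_real, Real.norm_eq_abs, norm_one] at this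
    exact this
  have : 1 < |lr| ^ N := one_lt_pow₀ habs (by omega)
  rw [habsN] at this
  exact lt_irrefl 1 this

lemma pair_list_sum (a : V) (l : List V) :
    rd.pair a l.sum = (l.map (rd.pair a)).sum := by
  induction l with
  | nil => simp [pair, map_zero]
  | cons x t ih => rw [List.sum_cons, pair_right_add, ih, List.map_cons, List.sum_cons]

lemma exists_nat_sum (a : V) (ha : a ∈ rd.Δ) :
    ∀ t : List V, (∀ x ∈ t, x ∈ rd.Δ) →
      (¬ ∃ b ∈ t, ∃ m : ℤ, m < 0 ∧ rd.pair a b = (m : ℂ)) →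
      ∃ n : ℕ, (t.map (rd.pair a)).sum = (n : ℂ) := by
  intro t
  induction t with
  | nil => intro _ _; exact ⟨0, by simp⟩
  | cons x xs ih =>
    intro hmem hneg
    obtain ⟨k, hk⟩ := rd.pair_int a ha x (hmem x (by simp))
    have hk0 : 0 ≤ k := by
      by_contra h
      exact hneg ⟨x, by simp, k, by omega, hk⟩
    obtain ⟨n, hn⟩ := ih (fun y hy => hmem y (by simp [hy]))
      (fun ⟨b, hb, m, hm, hpm⟩ => hneg ⟨b, by simp [hb], m, hm, hpm⟩)
    refine ⟨k.toNat + n, ?_⟩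
    have hk' : rd.pair a x = (k : ℂ) := hk
    rw [List.map_cons, List.sum_cons, hn, hk']
    rw [show ((k.toNat + n : ℕ) : ℂ) = ((k.toNat : ℤ) : ℂ) + (n : ℂ) by push_cast; ring,
        Int.toNat_of_nonneg hk0]

lemma no_zero_sum : ∀ (n : ℕ) (l : List V), l.length = n → l ≠ [] →
    (∀ x ∈ l, x ∈ rd.Pos) → l.sum ≠ 0 := by
  intro n
  induction n using Nat.strong_induction_on with
  | _ n ih =>
    intro l hlen hne hmem hsum
    classical
    match l, hne with
    | a :: t, _ =>
      have ha : a ∈ rd.Pos := hmem a (by simp)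
      have haΔ := rd.pos_subset ha
      have hBa := rd.root_self_ne a haΔ
      match t with
      | [] =>
        simp at hsum
        rw [hsum] at haΔ
        exact rd.zero_not_mem haΔ
      | b0 :: t0 =>
        have htmem : ∀ x ∈ b0 :: t0, x ∈ rd.Pos := fun x hx => hmem x (by simp [hx])
        have hps : rd.pair a ((a :: b0 :: t0).sum) = 0 := by rw [hsum]; simp [pair]
        rw [List.sum_cons, pair_right_add, pair_self _ _ hBa, pair_list_sum] at hps
        have hneg : ∃ b ∈ b0 :: t0, ∃ m : ℤ, m < 0 ∧ rd.pair a b = (m : ℂ) := by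
          by_contra h
          obtain ⟨k, hk⟩ := rd.exists_nat_sum a haΔ (b0 :: t0)
            (fun x hx => rd.pos_subset (htmem x hx)) h
          rw [hk] at hps
          have : ((k + 2 : ℕ) : ℂ) = 0 := by push_cast; linear_combination hps
          have hk2 : k + 2 = 0 := by exact_mod_cast this
          omega
        obtain ⟨b, hbt, m, hm, hpm⟩ := hneg
        have hb : b ∈ rd.Pos := htmem b hbt
        have habp : a + b ∈ rd.Pos := rd.sum_mem_pos ha hb hm hpm
        set l' : List V := (a + b) :: (b0 :: t0).erase b with hl'def
        have hperm : (b0 :: t0).Perm (b :: (b0 :: t0).erase b) := List.perm_cons_erase hbt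
        have hsum' : l'.sum = 0 := by
          rw [hl'def, List.sum_cons]
          have h1 : (b0 :: t0).sum = b + ((b0 :: t0).erase b).sum := by
            rw [hperm.sum_eq, List.sum_cons]
          have h2 : (a :: b0 :: t0).sum = a + (b0 :: t0).sum := by rw [List.sum_cons]
          rw [h2, h1] at hsum
          rw [← add_assoc] at hsum
          linear_combination (norm := module) hsum
        have hlen' : l'.length = n - 1 := by
          rw [hl'def, List.length_cons, List.length_erase_of_mem hbt]
          simp only [List.length_cons] at hlen ⊢
          omega
        have hn2 : 2 ≤ n := by simp only [List.length_cons] at hlen; omega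
        exact ih (n - 1) (by omega) l' hlen' (by simp [hl'def])
          (by
            intro x hx
            rw [hl'def] at hx
            rcases List.mem_cons.mp hx with h | h
            · rw [h]; exact habp
            · exact htmem x (List.mem_of_mem_erase h)) hsum'

lemma s_mem_W {a : V} (ha : a ∈ rd.Δ) : rd.s a ∈ rd.W :=
  Subgroup.subset_closure ⟨a, ha, rfl⟩

lemma s_s_self (a : V) : ∀ x, rd.s a (rd.s a x) = x := rd.s_involutive a

lemma P_add {x y : V} (hx : x ∈ rd.P) (hy : y ∈ rd.P) : x + y ∈ rd.P := by
  intro α hα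
  obtain ⟨n, hn⟩ := hx α hα
  obtain ⟨k, hk⟩ := hy α hα
  exact ⟨n + k, by rw [pair_right_add, hn, hk]; push_cast; ring⟩

lemma W_maps_P {g : V ≃ₗ[ℂ] V} (hg : g ∈ rd.W) {μ : V} (hμ : μ ∈ rd.P) : g μ ∈ rd.P := by
  intro α hα
  have hp := rd.preserves_of_mem_W hg
  have hginv := rd.preserves_of_mem_W (inv_mem hg)
  have h1 : rd.pair α (g μ) = rd.pair (g.symm α) μ := by
    conv_lhs => rw [← g.apply_symm_apply α]
    exact rd.pair_invariant hp _ _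
  have hsαΔ : g.symm α ∈ rd.Δ := rd.preserves_inv_delta g hp.2 α hα
  obtain ⟨n, hn⟩ := hμ (g.symm α) hsαΔ
  exact ⟨n, by rw [h1, hn]⟩

lemma one_mem_Wint (lam : V) : (1 : V ≃ₗ[ℂ] V) ∈ rd.Wint lam := by
  refine ⟨one_mem _, ?_⟩
  have : (1 : V ≃ₗ[ℂ] V) lam - lam = 0 := by simp
  rw [this]
  intro α hα
  exact ⟨0, by simp [pair]⟩

lemma sInt_mem_Wint {lam γ : V} (hγ : γ ∈ rd.Δint lam) : rd.s γ ∈ rd.Wint lam := by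
  refine ⟨rd.s_mem_W hγ.1, ?_⟩
  intro α hα
  obtain ⟨n, hn⟩ : ∃ n : ℤ, rd.pair γ lam = (n : ℂ) := hγ.2
  obtain ⟨k, hk⟩ := rd.pair_int α hα γ hγ.1
  have hk' : rd.pair α γ = (k : ℂ) := hk
  refine ⟨-(n * k), ?_⟩
  rw [s_apply]
  have e : lam - rd.pair γ lam • γ - lam = -(rd.pair γ lam) • γ := by module
  rw [e, pair_right_smul, hn, hk']
  push_cast; ring

lemma mul_mem_Wint {lam : V} {w1 w2 : V ≃ₗ[ℂ] V} (h1 : w1 ∈ rd.Wint lam)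
    (h2 : w2 ∈ rd.Wint lam) : w1 * w2 ∈ rd.Wint lam := by
  refine ⟨mul_mem h1.1 h2.1, ?_⟩
  have e : (w1 * w2) lam - lam = w1 (w2 lam - lam) + (w1 lam - lam) := by
    have h3 : (w1 * w2) lam = w1 (w2 lam) := rfl
    rw [h3, map_sub]
    module
  rw [e]
  exact rd.P_add (rd.W_maps_P h1.1 h2.2) h1.2

lemma sInt_maps_Δint {lam c γ : V} (hc : c ∈ rd.Δint lam) (hγ : γ ∈ rd.Δint lam) :
    rd.s c γ ∈ rd.Δint lam := by
  refine ⟨rd.s_mem_delta hc.1 hγ.1, ?_⟩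
  have hpres : rd.Preserves (rd.s c) := ⟨rd.B_s_s c, fun d hd => rd.s_mem_delta hc.1 hd⟩
  have h2 : rd.s c (rd.s c lam) = lam := rd.s_s_self c lam
  have h1 : rd.pair (rd.s c γ) lam = rd.pair γ (rd.s c lam) := by
    conv_lhs => rw [← h2]
    exact rd.pair_invariant hpres γ (rd.s c lam)
  obtain ⟨n, hn⟩ : ∃ n : ℤ, rd.pair γ lam = (n : ℂ) := hγ.2
  obtain ⟨k, hk⟩ : ∃ k : ℤ, rd.pair c lam = (k : ℂ) := hc.2
  obtain ⟨j, hj⟩ := rd.pair_int γ hγ.1 c hc.1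
  have hj' : rd.pair γ c = (j : ℂ) := hj
  refine ⟨n - k * j, ?_⟩
  rw [h1, s_apply, pair_right_sub, pair_right_smul, hn, hk, hj']
  push_cast; ring

set_option maxHeartbeats 1000000 in
lemma descent (lam : V) (w : V ≃ₗ[ℂ] V) (hw : w ∈ rd.W) :
    ∀ (n : ℕ) (w' : V ≃ₗ[ℂ] V), w' ∈ rd.Wint lam →
    {β | β ∈ rd.Pos ∧ w.symm β ∈ rd.Δint lam ∧ -(w' (w.symm β)) ∈ rd.Pos}.ncard = n →
    ∃ w'' ∈ rd.Wint lam,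
      {β | β ∈ rd.Pos ∧ w.symm β ∈ rd.Δint lam ∧ -(w'' (w.symm β)) ∈ rd.Pos} = ∅ := by
  intro n
  induction n using Nat.strong_induction_on with
  | _ n ih =>
    intro w' hw' hcard
    classical
    set Bad := {β | β ∈ rd.Pos ∧ w.symm β ∈ rd.Δint lam ∧ -(w' (w.symm β)) ∈ rd.Pos} with hBadDef
    rcases eq_or_ne Bad ∅ with he | hne
    · exact ⟨w', hw', he⟩
    obtain ⟨α, hαmem⟩ := Set.nonempty_iff_ne_empty.mpr hne
    obtain ⟨hαpos, hαint, hαbad⟩ := hαmem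
    have hαΔ : α ∈ rd.Δ := rd.pos_subset hαpos
    have hWinvp : rd.Preserves (w⁻¹) := rd.preserves_of_mem_W (inv_mem hw)
    have hw'p : rd.Preserves w' := rd.preserves_of_mem_W hw'.1
    set γ : V := w.symm α with hγdef
    have hγint : γ ∈ rd.Δint lam := hαint
    have hconj : ∀ x, rd.s γ (w.symm x) = w.symm (rd.s α x) := by
      intro x
      have h1 := rd.s_conj hWinvp α (w.symm x)
      have e1 : (w⁻¹ : V ≃ₗ[ℂ] V) = w.symm := rfl
      rw [e1, LinearEquiv.symm_symm, w.apply_symm_apply] at h1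
      exact h1
    set w'' : V ≃ₗ[ℂ] V := w' * rd.s γ with hw''def
    have hw''mem : w'' ∈ rd.Wint lam := rd.mul_mem_Wint hw' (rd.sInt_mem_Wint hγint)
    have hact : ∀ β, w'' (w.symm β) = w' (w.symm (rd.s α β)) := by
      intro β
      have h1 : w'' (w.symm β) = w' (rd.s γ (w.symm β)) := rfl
      rw [h1, hconj]
    set Bad2 := {β | β ∈ rd.Pos ∧ w.symm β ∈ rd.Δint lam ∧ -(w'' (w.symm β)) ∈ rd.Pos}
      with hBad2Def
    set f : V → V := fun β => if rd.s α β ∈ rd.Pos then rd.s α β else β with hfdef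
    have hαnotBad2 : α ∉ Bad2 := by
      rintro ⟨-, -, hbad⟩
      rw [hact α] at hbad
      have hsa : rd.s α α = -α := by rw [s_apply, pair_self _ _ (rd.root_self_ne α hαΔ)]; module
      rw [hsa, map_neg, map_neg, neg_neg] at hbad
      exact rd.pos_not_neg _ hbad hαbad
    have key : ∀ β ∈ Bad2, f β ∈ Bad ∧ f β ≠ α := by
      intro β hβ
      obtain ⟨hβpos, hβint, hβbad⟩ := hβ
      have hβΔ : β ∈ rd.Δ := rd.pos_subset hβpos
      by_cases hcase : rd.s α β ∈ rd.Pos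
      · have hfβ : f β = rd.s α β := if_pos hcase
        refine ⟨⟨by rw [hfβ]; exact hcase, ?_, ?_⟩, ?_⟩
        · rw [hfβ, ← hconj β]
          exact rd.sInt_maps_Δint hγint hβint
        · rw [hfβ, ← hact β]
          exact hβbad
        · rw [hfβ]
          intro hEq
          have h2 : β = rd.s α α := by
            have h3 := congrArg (rd.s α) hEq
            rw [rd.s_s_self] at h3
            exact h3
          have hsa : rd.s α α = -α := by
            rw [s_apply, pair_self _ _ (rd.root_self_ne α hαΔ)]; module
          rw [hsa] at h2
          rw [h2] at hβpos
          exact rd.pos_not_neg _ hαpos hβpos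
      · have hfβ : f β = β := if_neg hcase
        have hsβΔ : rd.s α β ∈ rd.Δ := rd.s_mem_delta hαΔ hβΔ
        have hδpos : -(rd.s α β) ∈ rd.Pos := (rd.pos_total _ hsβΔ).resolve_left hcase
        obtain ⟨mz, hmz⟩ := rd.pair_int α hαΔ β hβΔ
        have hmz' : rd.pair α β = (mz : ℂ) := hmz
        have hδeq : -(rd.s α β) = (mz : ℂ) • α - β := by
          rw [s_apply, hmz']; module
        have hm1 : 1 ≤ mz := by
          by_contra hcle
          push_neg at hcle
          have hmle : mz ≤ 0 := by omega
          set l : List V := β :: (-(rd.s α β)) :: List.replicate (-mz).toNat α with hldef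
          have hsuml : l.sum = 0 := by
            rw [hldef, List.sum_cons, List.sum_cons, List.sum_replicate, hδeq,
              ← Nat.cast_smul_eq_nsmul ℂ]
            have h0 : ((-mz).toNat : ℤ) = -mz := Int.toNat_of_nonneg (by omega)
            have hcast : (((-mz).toNat : ℕ) : ℂ) = -(mz : ℂ) := by
              calc (((-mz).toNat : ℕ) : ℂ) = (((-mz).toNat : ℤ) : ℂ) := by push_cast; ring
                _ = -(mz : ℂ) := by rw [h0]; push_cast; ring
            rw [hcast]
            module
          refine rd.no_zero_sum l.length l rfl (by simp [hldef]) ?_ hsuml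
          intro x hx
          rw [hldef] at hx
          rcases List.mem_cons.mp hx with h | h
          · rw [h]; exact hβpos
          rcases List.mem_cons.mp h with h' | h'
          · rw [h']; exact hδpos
          · rw [List.eq_of_mem_replicate h']; exact hαpos
        have hvδpos : w' (w.symm (-(rd.s α β))) ∈ rd.Pos := by
          have e2 : w' (w.symm (-(rd.s α β))) = -(w'' (w.symm β)) := by
            rw [hact β, map_neg, map_neg]
          rw [e2]
          exact hβbad
        have hvβ : -(w' (w.symm β)) ∈ rd.Pos := by
          by_contra hcb
          have hvβΔ : w' (w.symm β) ∈ rd.Δ := hw'p.2 _ (hWinvp.2 β hβΔ)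
          have hvβpos : w' (w.symm β) ∈ rd.Pos := (rd.pos_total _ hvβΔ).resolve_right hcb
          set l : List V := (w' (w.symm β)) :: (w' (w.symm (-(rd.s α β)))) ::
            List.replicate mz.toNat (-(w' (w.symm α))) with hldef
          have hsuml : l.sum = 0 := by
            rw [hldef, List.sum_cons, List.sum_cons, List.sum_replicate,
              ← Nat.cast_smul_eq_nsmul ℂ]
            have h0 : (mz.toNat : ℤ) = mz := Int.toNat_of_nonneg (by omega)
            have hcast : ((mz.toNat : ℕ) : ℂ) = (mz : ℂ) := by
              calc ((mz.toNat : ℕ) : ℂ) = ((mz.toNat : ℤ) : ℂ) := by push_cast; ring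
                _ = (mz : ℂ) := by rw [h0]
            rw [hcast, hδeq, map_sub, map_sub, map_smul, map_smul]
            module
          refine rd.no_zero_sum l.length l rfl (by simp [hldef]) ?_ hsuml
          intro x hx
          rw [hldef] at hx
          rcases List.mem_cons.mp hx with h | h
          · rw [h]; exact hvβpos
          rcases List.mem_cons.mp h with h' | h'
          · rw [h']; exact hvδpos
          · rw [List.eq_of_mem_replicate h']; exact hαbad
        refine ⟨⟨by rw [hfβ]; exact hβpos, by rw [hfβ]; exact hβint, by rw [hfβ]; exact hvβ⟩, ?_⟩
        rw [hfβ]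
        intro hEq
        rw [hEq] at hβpos hβint hβbad
        exact hαnotBad2 ⟨hβpos, hβint, hβbad⟩
    have hinj : Set.InjOn f Bad2 := by
      intro b1 h1 b2 h2 heq
      have h1p : b1 ∈ rd.Pos := h1.1
      have h2p : b2 ∈ rd.Pos := h2.1
      by_cases c1 : rd.s α b1 ∈ rd.Pos <;> by_cases c2 : rd.s α b2 ∈ rd.Pos
      · rw [hfdef] at heq; simp only [if_pos c1, if_pos c2] at heq
        exact (rd.s α).injective heq
      · rw [hfdef] at heq; simp only [if_pos c1, if_neg c2] at heq
        exfalso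
        rw [← heq, rd.s_s_self] at c2
        exact c2 h1p
      · rw [hfdef] at heq; simp only [if_neg c1, if_pos c2] at heq
        exfalso
        rw [heq, rd.s_s_self] at c1
        exact c1 h2p
      · rw [hfdef] at heq; simpa only [if_neg c1, if_neg c2] using heq
    have hBadFin : Bad.Finite := rd.finite.subset (fun β hβ => rd.pos_subset hβ.1)
    have hBad2Fin : Bad2.Finite := rd.finite.subset (fun β hβ => rd.pos_subset hβ.1)
    have himgsub : f '' Bad2 ⊆ Bad \ {α} := by
      rintro x ⟨β, hβ, rfl⟩
      exact ⟨(key β hβ).1, (key β hβ).2⟩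
    have hlt : Bad2.ncard < n := by
      rw [← hcard]
      calc Bad2.ncard = (f '' Bad2).ncard := (Set.ncard_image_of_injOn hinj).symm
        _ ≤ (Bad \ {α}).ncard := Set.ncard_le_ncard himgsub hBadFin.diff
        _ < Bad.ncard := Set.ncard_diff_singleton_lt_of_mem ⟨hαpos, hαint, hαbad⟩ hBadFin
    exact ih Bad2.ncard hlt w'' hw''mem rfl

end Paper.RootDatum

/-- Lemma 3.2 (1). For every `λ ∈ 𝔥*` and `w ∈ W` there is `w' ∈ W_λ`
with `Δ⁺ ∩ (w'w⁻¹)⁻¹ Δ⁻ ∩ w Δ_λ = ∅`. -/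
theorem statement9 {V : Type} [AddCommGroup V] [Module ℂ V] (rd : RootDatum V)
    (lam : V) (w : V ≃ₗ[ℂ] V) (hw : w ∈ rd.W) :
    ∃ w' ∈ rd.Wint lam,
      rd.Pos ∩ (⇑((w' * w⁻¹)⁻¹) '' {α | -α ∈ rd.Pos}) ∩ (⇑w '' rd.Δint lam) = ∅ := by
  obtain ⟨w', hw'mem, hempty⟩ := rd.descent lam w hw
    ({β | β ∈ rd.Pos ∧ w.symm β ∈ rd.Δint lam ∧
        -((1 : V ≃ₗ[ℂ] V) (w.symm β)) ∈ rd.Pos}.ncard)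
    1 (rd.one_mem_Wint lam) rfl
  refine ⟨w', hw'mem, ?_⟩
  ext x
  simp only [Set.mem_inter_iff, Set.mem_image, Set.mem_empty_iff_false, iff_false]
  rintro ⟨⟨hxpos, ⟨y, hy, hyx⟩⟩, ⟨z, hz, hzx⟩⟩
  have hxint : w.symm x ∈ rd.Δint lam := by
    rw [← hzx, w.symm_apply_apply]
    exact hz
  have hybad : -(w' (w.symm x)) ∈ rd.Pos := by
    have e1 : (((w' * w⁻¹)⁻¹ : V ≃ₗ[ℂ] V) : V → V) = (w' * w⁻¹).symm := rfl
    have h1 : y = (w' * w⁻¹) x := by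
      rw [← hyx, e1, LinearEquiv.apply_symm_apply]
    have e2 : (w' * w⁻¹) x = w' (w.symm x) := rfl
    rw [h1, e2] at hy
    exact hy
  have hxBad : x ∈ ({β | β ∈ rd.Pos ∧ w.symm β ∈ rd.Δint lam ∧
      -(w' (w.symm β)) ∈ rd.Pos} : Set V) := ⟨hxpos, hxint, hybad⟩
  rw [hempty] at hxBad
  exact hxBad
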